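/- Let S̄ = (S_0,…,S_n) and T̄ = (T_0,…,T_n) be n-slices of the finite group G. Then the number of families (μ_i : G/S_i → G/T_i)_{0≤i≤n} of G-equivariant maps commuting with the natural projections G/S_{i-1} → G/S_i and G/T_{i-1} → G/T_i equals the mark m(S̄,T̄) = |{gT_0 ∈ G/T_0 : g⁻¹S_ig ≤ T_i for all i = 0,…,n}|. -/

import Mathlib

variable {G : Type*}

/-- The mark `m(K̄,S̄) = |{gS₀ ∈ G/S₀ : g⁻¹Kᵢg ≤ Sᵢ for all i}|`. -/
noncomputable def mark [Group G] {n : ℕ} (K S : Fin (n + 1) → Subgroup G) : ℕ :=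
  Nat.card {x : G ⧸ S 0 //
    ∃ g : G, QuotientGroup.mk g = x ∧ ∀ i, ∀ k ∈ K i, g⁻¹ * k * g ∈ S i}

/-- Natural projection `G/H → G/K` for `H ≤ K`. -/
def cosetProj [Group G] {H K : Subgroup G} (h : H ≤ K) : G ⧸ H → G ⧸ K :=
  Quotient.map' id fun a b hab => by
    rw [QuotientGroup.leftRel_apply] at hab ⊢
    exact h hab

lemma cosetProj_mk [Group G] {H K : Subgroup G} (h : H ≤ K) (a : G) :
    cosetProj h (QuotientGroup.mk a) = QuotientGroup.mk a := rfl

lemma smul_mk' [Group G] {H : Subgroup G} (a b : G) :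
    a • (QuotientGroup.mk b : G ⧸ H) = QuotientGroup.mk (a * b) := rfl

/-- the number of families `(μᵢ : G/Sᵢ → G/Tᵢ)` of `G`-equivariant maps
commuting with the natural projections equals the mark
`m(S̄,T̄) = |{gT₀ ∈ G/T₀ : g⁻¹Sᵢg ≤ Tᵢ for all i}|`. -/
theorem card_hom_eq_mark {n : ℕ} [Group G] [Finite G]
    (S T : Fin (n + 1) → Subgroup G) (hS : Monotone S) (hT : Monotone T) :
    Nat.card {μ : ∀ i : Fin (n + 1), G ⧸ S i → G ⧸ T i //
        (∀ (i : Fin (n + 1)) (g : G) (y : G ⧸ S i), μ i (g • y) = g • μ i y) ∧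
        ∀ i : Fin n,
          μ i.succ ∘ cosetProj (hS (Fin.castSucc_lt_succ : i.castSucc < i.succ).le) =
            cosetProj (hT (Fin.castSucc_lt_succ : i.castSucc < i.succ).le) ∘ μ i.castSucc} =
      mark S T := by
  classical
  -- key: the value at all base points is determined by the value at the base point of level 0
  have key : ∀ (μ : ∀ i : Fin (n + 1), G ⧸ S i → G ⧸ T i),
      (∀ i : Fin n,
          μ i.succ ∘ cosetProj (hS (Fin.castSucc_lt_succ : i.castSucc < i.succ).le) =
            cosetProj (hT (Fin.castSucc_lt_succ : i.castSucc < i.succ).le) ∘ μ i.castSucc) →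
      ∀ g : G, QuotientGroup.mk g = μ 0 (QuotientGroup.mk 1) →
      ∀ i, μ i (QuotientGroup.mk 1) = QuotientGroup.mk g := by
    intro μ hcomm g hg i
    induction i using Fin.induction with
    | zero => exact hg.symm
    | succ i ih =>
      have h := congrFun (hcomm i) (QuotientGroup.mk 1)
      simp only [Function.comp_apply, cosetProj_mk] at h
      rw [h, ih, cosetProj_mk]
  have mem : ∀ μ : {μ : ∀ i : Fin (n + 1), G ⧸ S i → G ⧸ T i //
        (∀ (i : Fin (n + 1)) (g : G) (y : G ⧸ S i), μ i (g • y) = g • μ i y) ∧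
        ∀ i : Fin n,
          μ i.succ ∘ cosetProj (hS (Fin.castSucc_lt_succ : i.castSucc < i.succ).le) =
            cosetProj (hT (Fin.castSucc_lt_succ : i.castSucc < i.succ).le) ∘ μ i.castSucc},
      ∃ g : G, QuotientGroup.mk g = μ.1 0 (QuotientGroup.mk 1) ∧
        ∀ i, ∀ k ∈ S i, g⁻¹ * k * g ∈ T i := by
    rintro ⟨μ, heq, hcomm⟩
    obtain ⟨g, hg⟩ := QuotientGroup.mk_surjective (μ 0 (QuotientGroup.mk 1))
    refine ⟨g, hg, fun i k hk => ?_⟩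
    have h1 : μ i (QuotientGroup.mk 1) = QuotientGroup.mk g := key μ hcomm g hg i
    have h2 := heq i k (QuotientGroup.mk 1)
    have h3 : (k • (QuotientGroup.mk 1 : G ⧸ S i)) = QuotientGroup.mk 1 := by
      rw [smul_mk', mul_one]
      exact (QuotientGroup.eq).2 (by simpa using inv_mem hk)
    rw [h3, h1, smul_mk'] at h2
    have h4 := (QuotientGroup.eq).1 h2
    simpa [mul_assoc] using h4
  refine Nat.card_eq_of_bijective
    (fun μ => ⟨μ.1 0 (QuotientGroup.mk 1), mem μ⟩) ⟨?_, ?_⟩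
  · rintro ⟨μ, hμeq, hμc⟩ ⟨ν, hνeq, hνc⟩ h
    have h0 : μ 0 (QuotientGroup.mk 1) = ν 0 (QuotientGroup.mk 1) :=
      congrArg Subtype.val h
    obtain ⟨g, hg⟩ := QuotientGroup.mk_surjective (μ 0 (QuotientGroup.mk 1))
    have hμ : ∀ i, μ i (QuotientGroup.mk 1) = QuotientGroup.mk g := key μ hμc g hg
    have hν : ∀ i, ν i (QuotientGroup.mk 1) = QuotientGroup.mk g :=
      key ν hνc g (hg.trans h0)
    refine Subtype.ext (funext fun i => funext fun x => ?_)
    obtain ⟨a, rfl⟩ := QuotientGroup.mk_surjective x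
    have e : (QuotientGroup.mk a : G ⧸ S i) = a • QuotientGroup.mk 1 := by
      rw [smul_mk', mul_one]
    show μ i (QuotientGroup.mk a) = ν i (QuotientGroup.mk a)
    rw [e, hμeq, hνeq, hμ, hν]
  · rintro ⟨x, g, hg, hk⟩
    let ν : ∀ i : Fin (n + 1), G ⧸ S i → G ⧸ T i := fun i =>
      Quotient.map' (· * g) fun a b hab => by
        rw [QuotientGroup.leftRel_apply] at hab ⊢
        have : g⁻¹ * (a⁻¹ * b) * g ∈ T i := hk i _ hab
        simpa [mul_assoc] using this
    refine ⟨⟨ν, ?_, ?_⟩, ?_⟩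
    · intro i h y
      obtain ⟨a, rfl⟩ := QuotientGroup.mk_surjective y
      rw [smul_mk']
      show (QuotientGroup.mk (h * a * g) : G ⧸ T i) = h • QuotientGroup.mk (a * g)
      rw [smul_mk', mul_assoc]
    · intro i
      funext y
      obtain ⟨a, rfl⟩ := QuotientGroup.mk_surjective y
      rfl
    · refine Subtype.ext ?_
      show (QuotientGroup.mk (1 * g) : G ⧸ T 0) = x
      rw [one_mul]; exact hg
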